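/- Let (x_i, v_i)_{i=1}^N be a C¹ solution on [0,∞) of the flocking system with friction, with friction exponent r > 0, and define the energy E(t) = max_{1≤j≤N} (1/2)‖v_j(t)‖² and c̲ = min_i c_i. If E(0) > 0, then for all t ≥ 0: E(t) ≤ ( E(0)^{−r/2} + 2^{r/2} r c̲ t )^{−2/r}. -/

import Mathlib

open MeasureTheory Set Filter
open Topology

lemma aux_rpow_pow (x : ℝ) (hx : 0 ≤ x) (r : ℝ) (hr : 0 < r) :
    x ^ r * x ^ 2 = ((x ^ 2 : ℝ)) ^ (r/2 + 1) := by
  rcases eq_or_lt_of_le hx with h | h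
  · rw [← h, Real.zero_rpow (ne_of_gt hr), zero_mul,
      show ((0:ℝ)^2) = (0:ℝ) by ring, Real.zero_rpow (by positivity)]
  · rw [← Real.rpow_natCast x 2, ← Real.rpow_mul hx, ← Real.rpow_add h]
    norm_num
    ring_nf

lemma aux_inner_bound {E : Type*} [NormedAddCommGroup E] [InnerProductSpace ℝ E] {N : ℕ}
    (v : Fin N → E) (j : Fin N) (a : Fin N → ℝ) (ha : ∀ k, 0 ≤ a k) (hsum : ∑ k, a k = 1)
    (αj cj cm r : ℝ) (hα : 0 ≤ αj) (hcm : cm ≤ cj) (hr : 0 < r)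
    (hmax : ∀ k, ‖v k‖ ≤ ‖v j‖) :
    (inner ℝ (αj • ((∑ k, a k • v k) - v j) - (cj * ‖v j‖ ^ r) • v j) (v j) : ℝ)
      ≤ -cm * ((‖v j‖ ^ 2 : ℝ)) ^ (r/2 + 1) := by
  have hnorm : ‖∑ k, a k • v k‖ ≤ ‖v j‖ := by
    calc ‖∑ k, a k • v k‖ ≤ ∑ k, ‖a k • v k‖ := norm_sum_le _ _
    _ = ∑ k, a k * ‖v k‖ := by
        refine Finset.sum_congr rfl fun k _ => ?_
        rw [norm_smul, Real.norm_eq_abs, abs_of_nonneg (ha k)]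
    _ ≤ ∑ k, a k * ‖v j‖ := by
        refine Finset.sum_le_sum fun k _ => mul_le_mul_of_nonneg_left (hmax k) (ha k)
    _ = ‖v j‖ := by rw [← Finset.sum_mul, hsum, one_mul]
  have h1 : (inner ℝ ((∑ k, a k • v k) - v j) (v j) : ℝ) ≤ 0 := by
    rw [inner_sub_left]
    have := real_inner_le_norm (∑ k, a k • v k) (v j)
    have h2 : (inner ℝ (v j) (v j) : ℝ) = ‖v j‖ ^ 2 := real_inner_self_eq_norm_sq _
    nlinarith [norm_nonneg (v j)]
  rw [inner_sub_left, real_inner_smul_left, real_inner_smul_left, real_inner_self_eq_norm_sq]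
  have h3 : αj * (inner ℝ ((∑ k, a k • v k) - v j) (v j) : ℝ) ≤ 0 :=
    mul_nonpos_of_nonneg_of_nonpos hα h1
  have h4 : cm * (‖v j‖ ^ r * ‖v j‖ ^ 2) ≤ cj * (‖v j‖ ^ r * ‖v j‖ ^ 2) :=
    mul_le_mul_of_nonneg_right hcm (by positivity)
  have h5 := aux_rpow_pow ‖v j‖ (norm_nonneg _) r hr
  have h6 : cj * ‖v j‖ ^ r * ‖v j‖ ^ 2 = cj * (‖v j‖ ^ r * ‖v j‖ ^ 2) := by ring
  have h7 : cm * (‖v j‖ ^ r * ‖v j‖ ^ 2) = cm * ((‖v j‖ ^ 2 : ℝ)) ^ (r/2 + 1) := by rw [h5]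
  linarith [h3, h4]

theorem aux_decay {N : ℕ} [Nonempty (Fin N)] (e : Fin N → ℝ → ℝ) (cm r : ℝ)
    (hr : 0 < r) (hcm : 0 < cm)
    (hecont : ∀ j, ContinuousOn (e j) (Ici 0))
    (he_nonneg : ∀ j, ∀ s ∈ Ici (0:ℝ), 0 ≤ e j s)
    (hderiv : ∀ j, ∀ s ∈ Ici (0:ℝ), ∃ dd, HasDerivWithinAt (e j) dd (Ici 0) s ∧
        ((∀ k, e k s ≤ e j s) → dd ≤ -cm * (2 * e j s) ^ (r/2+1)))
    (hE0 : 0 < ⨆ j, e j 0) :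
    ∀ t ∈ Ici (0:ℝ), (⨆ j, e j t) ≤
      ((⨆ j, e j 0) ^ (-(r/2)) + (2:ℝ)^(r/2) * r * cm * t) ^ (-(2/r)) := by
  have hrne : r ≠ 0 := ne_of_gt hr
  set En : ℝ → ℝ := fun s => ⨆ j, e j s with hEn
  have hbdd : ∀ s, BddAbove (range fun j => e j s) := fun s => (finite_range _).bddAbove
  have hle : ∀ k s, e k s ≤ En s := fun k s => le_ciSup (hbdd s) k
  have hattain : ∀ s, ∃ j, En s = e j s ∧ ∀ k, e k s ≤ e j s := by
    intro s; obtain ⟨j, hj⟩ := Finite.exists_max (fun k => e k s)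
    exact ⟨j, le_antisymm (ciSup_le hj) (hle j s), hj⟩
  have hEcont : ContinuousOn En (Ici 0) := by
    have := ContinuousOn.finset_sup'_apply (f := e) (t := Ici (0:ℝ)) Finset.univ_nonempty
      (fun j _ => hecont j)
    refine this.congr fun s _ => ?_
    rw [hEn]; beta_reduce; rw [Finset.sup'_univ_eq_ciSup]
  set f' : ℝ → ℝ := fun s => -cm * (2 * En s) ^ (r/2+1) with hf'def
  -- liminf estimate for the sup
  have hfr : ∀ b : ℝ, ∀ x ∈ Ico (0:ℝ) b, ∀ z, f' x < z →
      ∃ᶠ s in 𝓝[>] x, slope En x s < z := by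
    intro b x hx z hz
    have hx0 : (0:ℝ) ≤ x := hx.1
    have hsub : Ioi x ⊆ Ici (0:ℝ) := fun y hy => le_trans hx0 (le_of_lt hy)
    have hmono : 𝓝[>] x ≤ 𝓝[Ici (0:ℝ)] x := nhdsWithin_mono x hsub
    have hfreq : ∃ j, ∃ᶠ s in 𝓝[>] x, En s = e j s := by
      by_contra h
      push_neg at h
      obtain ⟨s, hs⟩ := (eventually_all.2 h).exists
      obtain ⟨j, hj, -⟩ := hattain s
      exact hs j hj
    obtain ⟨j, hj⟩ := hfreq
    have hEx : En x = e j x :=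
      tendsto_nhds_unique_of_frequently_eq
        ((hEcont x hx0).mono_left hmono) (((hecont j) x hx0).mono_left hmono) hj
    obtain ⟨dd, hdd, hbound⟩ := hderiv j x hx0
    have hmax : ∀ k, e k x ≤ e j x := fun k => hEx ▸ hle k x
    have hdz : dd < z := by
      refine lt_of_le_of_lt (le_trans (hbound hmax) ?_) hz
      rw [hf'def]
      simp only []
      rw [hEx]
    have hslope : Tendsto (slope (e j) x) (𝓝[>] x) (𝓝 dd) :=
      (hasDerivWithinAt_iff_tendsto_slope' (fun h => lt_irrefl x h)).1 (hdd.mono hsub)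
    have hev : ∀ᶠ s in 𝓝[>] x, slope (e j) x s < z := hslope.eventually_lt_const hdz
    refine (hj.and_eventually hev).mono ?_
    rintro s ⟨h1, h2⟩
    rwa [slope_def_field, ← h1, ← hEx, ← slope_def_field] at h2
  intro t ht
  have ht' : (0:ℝ) ≤ t := ht
  have hA : (0:ℝ) < En 0 ^ (-(r/2)) := Real.rpow_pos_of_pos hE0 _
  set A := En 0 ^ (-(r/2)) with hAdef
  have main : ∀ ε ∈ Ioo (0:ℝ) cm,
      En t ≤ (A + (2:ℝ)^(r/2) * r * (cm - ε) * t) ^ (-(2/r)) := by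
    intro ε hε
    set K := (2:ℝ)^(r/2) * r * (cm - ε) with hK
    have hKpos : 0 < K :=
      mul_pos (mul_pos (Real.rpow_pos_of_pos two_pos _) hr) (sub_pos.2 hε.2)
    have hupos : ∀ s : ℝ, 0 ≤ s → 0 < A + K * s := fun s hs =>
      add_pos_of_pos_of_nonneg hA (mul_nonneg hKpos.le hs)
    set B : ℝ → ℝ := fun s => (A + K * s) ^ (-(2/r)) with hBdef
    set B' : ℝ → ℝ := fun s => K * (-(2/r)) * (A + K * s) ^ (-(2/r) - 1) with hB'def
    have hB' : ∀ s ∈ Ico (0:ℝ) t, HasDerivWithinAt B (B' s) (Ici s) s := by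
      intro s hs
      have h1 : HasDerivAt (fun y => A + K * y) K s := by
        simpa using ((hasDerivAt_id s).const_mul K).const_add A
      exact (h1.rpow_const (Or.inl (ne_of_gt (hupos s hs.1)))).hasDerivWithinAt
    have hBc : ContinuousOn B (Icc 0 t) := by
      apply ContinuousOn.rpow_const
      · exact (continuous_const.add (continuous_const.mul continuous_id)).continuousOn
      · intro s hs; exact Or.inl (ne_of_gt (hupos s hs.1))
    have hB0 : En 0 ≤ B 0 := by
      rw [hBdef]
      simp only [mul_zero, add_zero]
      rw [hAdef, ← Real.rpow_mul (le_of_lt hE0),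
        show (-(r/2)) * (-(2/r)) = 1 by field_simp, Real.rpow_one]
    have hcontact : ∀ s ∈ Ico (0:ℝ) t, En s = B s → f' s < B' s := by
      intro s hs hEB
      have hu : 0 < A + K * s := hupos s hs.1
      have e1 : ((A + K * s) ^ (-(2/r))) ^ (r/2+1) = (A + K * s) ^ (-(2/r) - 1) := by
        rw [← Real.rpow_mul hu.le, show (-(2/r)) * (r/2+1) = -(2/r) - 1 by field_simp; ring]
      have e2 : (2 * B s) ^ (r/2+1)
          = 2 ^ (r/2+1) * (A + K * s) ^ (-(2/r) - 1) := by
        rw [hBdef]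
        simp only []
        rw [Real.mul_rpow (by norm_num) (Real.rpow_nonneg hu.le _), e1]
      have e3 : (2:ℝ) ^ (r/2+1) = 2 ^ (r/2) * 2 := Real.rpow_add_one (by norm_num) _
      have hU : 0 < (A + K * s) ^ (-(2/r) - 1) := Real.rpow_pos_of_pos hu _
      have key : -cm * (2 ^ (r/2) * 2 * (A + K * s) ^ (-(2/r) - 1))
          < -(cm - ε) * (2 ^ (r/2) * 2 * (A + K * s) ^ (-(2/r) - 1)) := by
        have hX : 0 < (2:ℝ) ^ (r/2) * 2 * (A + K * s) ^ (-(2/r) - 1) := by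
          have : (0:ℝ) < (2:ℝ) ^ (r/2) := Real.rpow_pos_of_pos two_pos _
          positivity
        exact mul_lt_mul_of_pos_right (by linarith [hε.1]) hX
      have eB' : B' s = -(cm - ε) * (2 ^ (r/2) * 2 * (A + K * s) ^ (-(2/r) - 1)) := by
        rw [hB'def]
        simp only []
        rw [hK]
        field_simp
      have eF : f' s = -cm * (2 ^ (r/2) * 2 * (A + K * s) ^ (-(2/r) - 1)) := by
        rw [hf'def]
        simp only []
        rw [hEB, e2, e3]
      rw [eF, eB']
      exact key
    have := image_le_of_liminf_slope_right_lt_deriv_boundary'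
      (hEcont.mono (Icc_subset_Ici_self)) (hfr t) hB0 hBc hB' hcontact
      (right_mem_Icc.2 ht')
    exact this
  have hpos : (0:ℝ) < A + (2:ℝ)^(r/2) * r * cm * t := by
    have h2 : (0:ℝ) < (2:ℝ) ^ (r/2) := Real.rpow_pos_of_pos two_pos _
    have : 0 ≤ (2:ℝ)^(r/2) * r * cm * t := by positivity
    linarith
  have htend : Tendsto (fun ε => (A + (2:ℝ)^(r/2) * r * (cm - ε) * t) ^ (-(2/r)))
      (𝓝[>] (0:ℝ)) (𝓝 ((A + (2:ℝ)^(r/2) * r * cm * t) ^ (-(2/r)))) := by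
    have hbase : Tendsto (fun ε : ℝ => A + (2:ℝ)^(r/2) * r * (cm - ε) * t) (𝓝 0)
        (𝓝 (A + (2:ℝ)^(r/2) * r * cm * t)) := by
      have hco : Continuous fun ε : ℝ => A + (2:ℝ)^(r/2) * r * (cm - ε) * t := by
        fun_prop
      have := hco.tendsto 0
      simpa using this
    exact ((Real.continuousAt_rpow_const _ _ (Or.inl (ne_of_gt hpos))).tendsto.comp
      hbase).mono_left nhdsWithin_le_nhds
  have hev : ∀ᶠ ε in 𝓝[>] (0:ℝ),
      En t ≤ (A + (2:ℝ)^(r/2) * r * (cm - ε) * t) ^ (-(2/r)) := by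
    filter_upwards [Ioo_mem_nhdsGT_of_mem ⟨le_rfl, hcm⟩] with ε hε using main ε hε
  exact ge_of_tendsto htend hev

/-- For a `C¹` solution of the flocking system with friction (friction
exponent `r > 0`), the energy `E(t) = max_j ½‖v_j(t)‖²` satisfies, when `E(0) > 0`, the decay
estimate `E(t) ≤ (E(0)^{-r/2} + 2^{r/2} r c̲ t)^{-2/r}` for all `t ≥ 0`, where
`c̲ = min_i c_i`. -/
theorem friction_energy_decay_estimate
    (N d : ℕ) (hN : 1 ≤ N)
    (x v : Fin N → ℝ → EuclideanSpace ℝ (Fin d))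
    (a : Fin N → Fin N → ℝ → ℝ) (α : Fin N → ℝ → ℝ)
    (c : Fin N → ℝ) (r : ℝ) (hr : 0 < r) (hc : ∀ i, 0 < c i)
    (ha_cont : ∀ i j, ContinuousOn (a i j) (Ici 0))
    (ha_nonneg : ∀ i j, ∀ t ∈ Ici (0:ℝ), 0 ≤ a i j t)
    (ha_sum : ∀ i, ∀ t ∈ Ici (0:ℝ), ∑ j, a i j t = 1)
    (hα_cont : ∀ i, ContinuousOn (α i) (Ici 0))
    (hα_nonneg : ∀ i, ∀ t ∈ Ici (0:ℝ), 0 ≤ α i t)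
    (hx : ∀ i, ∀ t ∈ Ici (0:ℝ), HasDerivWithinAt (x i) (v i t) (Ici 0) t)
    (hv : ∀ i, ∀ t ∈ Ici (0:ℝ),
      HasDerivWithinAt (v i)
        (α i t • ((∑ j, a i j t • v j t) - v i t) - (c i * ‖v i t‖ ^ r) • v i t) (Ici 0) t)
    (hE0 : 0 < ⨆ j, (1 / 2) * ‖v j 0‖ ^ 2) :
    ∀ t ∈ Ici (0:ℝ),
      (⨆ j, (1 / 2) * ‖v j t‖ ^ 2) ≤
        ((⨆ j, (1 / 2) * ‖v j 0‖ ^ 2) ^ (-(r / 2)) +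
            (2:ℝ) ^ (r / 2) * r * (⨅ i, c i) * t) ^ (-(2 / r)) := by
  haveI : Nonempty (Fin N) := ⟨⟨0, hN⟩⟩
  have hbddc : BddBelow (range c) := (finite_range c).bddBelow
  have hcm_le : ∀ i, (⨅ i, c i) ≤ c i := fun i => ciInf_le hbddc i
  have hcm_pos : 0 < ⨅ i, c i := by
    obtain ⟨i0, hi0⟩ := Finite.exists_min c
    have h : (⨅ i, c i) = c i0 := le_antisymm (ciInf_le hbddc i0) (le_ciInf hi0)
    rw [h]; exact hc i0
  have hecont : ∀ j, ContinuousOn (fun s => (1/2 : ℝ) * ‖v j s‖ ^ 2) (Ici 0) := by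
    intro j
    have hvc : ContinuousOn (v j) (Ici (0:ℝ)) := fun s hs => (hv j s hs).continuousWithinAt
    exact continuousOn_const.mul (hvc.norm.pow 2)
  have he_nonneg : ∀ j, ∀ s ∈ Ici (0:ℝ), 0 ≤ (1/2 : ℝ) * ‖v j s‖ ^ 2 := by
    intro j s _; positivity
  have hderiv : ∀ j, ∀ s ∈ Ici (0:ℝ), ∃ dd,
      HasDerivWithinAt (fun u => (1/2 : ℝ) * ‖v j u‖ ^ 2) dd (Ici 0) s ∧
      ((∀ k, (1/2 : ℝ) * ‖v k s‖ ^ 2 ≤ (1/2 : ℝ) * ‖v j s‖ ^ 2) →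
        dd ≤ -(⨅ i, c i) * (2 * ((1/2 : ℝ) * ‖v j s‖ ^ 2)) ^ (r/2+1)) := by
    intro j s hs
    set w := α j s • ((∑ k, a j k s • v k s) - v j s) - (c j * ‖v j s‖ ^ r) • v j s with hw
    refine ⟨(inner ℝ w (v j s) : ℝ), ?_, ?_⟩
    · have h := (HasDerivWithinAt.inner ℝ (hv j s hs) (hv j s hs)).const_mul (1/2 : ℝ)
      have heq : (fun u => (1/2:ℝ) * (inner ℝ (v j u) (v j u) : ℝ))
          = fun u => (1/2:ℝ) * ‖v j u‖ ^ 2 := by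
        funext u; rw [real_inner_self_eq_norm_sq]
      rw [heq] at h
      refine h.congr_deriv ?_
      rw [hw, real_inner_comm]
      ring
    · intro hmax
      have hm : ∀ k, ‖v k s‖ ≤ ‖v j s‖ := by
        intro k
        have h1 := hmax k
        nlinarith [norm_nonneg (v k s), norm_nonneg (v j s)]
      have hb := aux_inner_bound (fun k => v k s) j (fun k => a j k s)
        (fun k => ha_nonneg j k s hs) (ha_sum j s hs) (α j s) (c j) (⨅ i, c i) r
        (hα_nonneg j s hs) (hcm_le j) hr hm
      rw [show (2:ℝ) * ((1/2 : ℝ) * ‖v j s‖ ^ 2) = ‖v j s‖ ^ 2 by ring]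
      exact hb
  exact aux_decay (fun j s => (1/2 : ℝ) * ‖v j s‖ ^ 2) (⨅ i, c i) r hr hcm_pos
    hecont he_nonneg hderiv hE0
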